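/- arXiv:2001.03956 — 2 statements merged into one kernel-verified Lean document; each statement's English description precedes it below -/
import Mathlib

section
/- For any n ≥ 1, let c be a real-valued cost function on the subsets of N = {1, …, n} that is antitone with respect to inclusion (S ⊆ T implies c(T) ≤ c(S)). Let v(S) := c(∅) − c(S), let φ_j(v) be the Shapley value of j for (N, v), and let e_j := c(∅)/n − φ_j(v). Then for every j ∈ N, e_j ≤ c({j})/n. -/
open Finset

/-- The Shapley value of player `j` in the game `(N, v)` on `N = Fin n`:
`φ_j(v) = Σ_{S ⊆ N \ {j}} (|S|! (n-|S|-1)! / n!) (v (S ∪ {j}) - v S)`. -/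
noncomputable def shapley (n : ℕ) (v : Finset (Fin n) → ℝ) (j : Fin n) : ℝ :=
  ∑ S ∈ ((Finset.univ : Finset (Fin n)).erase j).powerset,
    ((S.card.factorial * (n - S.card - 1).factorial : ℕ) : ℝ) / (n.factorial : ℝ)
      * (v (insert j S) - v S)

/-- For an inclusion-antitone cost function `c` on subsets of `N = {1, …, n}`,
the SVEA `e_j = c ∅ / n - φ_j(v)` of the value game `v S = c ∅ - c S`
satisfies `e_j ≤ c {j} / n` for every `j`. -/
theorem svea_le_singleton_cost_div (n : ℕ) (hn : 1 ≤ n)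
    (c : Finset (Fin n) → ℝ)
    (hc : ∀ S T : Finset (Fin n), S ⊆ T → c T ≤ c S)
    (v : Finset (Fin n) → ℝ) (hv : ∀ S, v S = c ∅ - c S)
    (e : Fin n → ℝ) (he : ∀ j, e j = c ∅ / (n : ℝ) - shapley n v j) :
    ∀ j : Fin n, e j ≤ c {j} / (n : ℝ) := by
  obtain ⟨m, rfl⟩ : ∃ m, n = m + 1 := ⟨n - 1, (Nat.succ_pred_eq_of_pos hn).symm⟩
  intro j
  rw [he j]
  set f : Finset (Fin (m + 1)) → ℝ := fun S =>
    ((S.card.factorial * (m + 1 - S.card - 1).factorial : ℕ) : ℝ) / ((m + 1).factorial : ℝ)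
      * (v (insert j S) - v S) with hf
  have hterm : ∀ S ∈ ((Finset.univ : Finset (Fin (m + 1))).erase j).powerset, 0 ≤ f S := by
    intro S _
    apply mul_nonneg
    · positivity
    · have := hc S (insert j S) (Finset.subset_insert j S)
      rw [hv, hv]
      linarith
  have hmem : (∅ : Finset (Fin (m + 1))) ∈
      ((Finset.univ : Finset (Fin (m + 1))).erase j).powerset :=
    Finset.empty_mem_powerset _
  have hkey : f ∅ ≤ shapley (m + 1) v j := Finset.single_le_sum hterm hmem
  have hfe : f ∅ = (c ∅ - c {j}) / ((m : ℝ) + 1) := by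
    rw [hf]
    simp only [Finset.card_empty, Nat.factorial_zero, one_mul, Finset.insert_empty,
      Nat.sub_zero, Nat.add_sub_cancel, hv]
    have hfac : (((m + 1).factorial : ℕ) : ℝ) = ((m + 1 : ℕ) : ℝ) * (m.factorial : ℝ) := by
      rw [Nat.factorial_succ]; push_cast; ring
    have h1 : (m.factorial : ℝ) ≠ 0 := by positivity
    have h2 : ((m : ℝ) + 1) ≠ 0 := by positivity
    rw [hfac]; push_cast
    field_simp
    ring
  rw [hfe] at hkey
  have h2 : (0 : ℝ) < (m : ℝ) + 1 := by positivity
  have h3 : ((m + 1 : ℕ) : ℝ) = (m : ℝ) + 1 := by push_cast; ring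
  rw [h3, sub_div] at *
  linarith
end

section
/- (Theorem 2: individual rationality of SVEA.) Let n ≥ 1, m ≥ 1 and fix a dataset of m labeled points (x_i, y_i) with x_i ∈ ℝ^n and y_i ∈ {−1, 1}. Let v(S) := tr_er(∅) − tr_er(S) for S ⊆ N = {1, …, n}, let φ_j(v) be the Shapley value of feature j for the game (N, v), and set e_j := tr_er(∅)/n − φ_j(v). Then the SVEA satisfies individual rationality: for every feature j ∈ N, e_j ≤ tr_er({j}). -/
open Finset

/-- Hinge-loss training error of the best linear classifier that uses only the
features in `S` (plus an intercept), for the dataset `(x i, y i), i = 1, …, m`. -/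
noncomputable def trEr (n m : ℕ) (x : Fin m → Fin n → ℝ) (y : Fin m → ℝ)
    (S : Finset (Fin n)) : ℝ :=
  sInf { r : ℝ | ∃ (w : Fin n → ℝ) (b : ℝ),
    r = (1 / (m : ℝ)) * ∑ i : Fin m, max 0 (1 - y i * (∑ j ∈ S, w j * x i j + b)) }

lemma trEr_nonneg (n m : ℕ) (x : Fin m → Fin n → ℝ) (y : Fin m → ℝ)
    (S : Finset (Fin n)) : 0 ≤ trEr n m x y S := by
  apply Real.sInf_nonneg
  rintro r ⟨w, b, rfl⟩
  apply mul_nonneg (by positivity)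
  exact Finset.sum_nonneg fun i _ => le_max_left _ _

lemma trEr_anti (n m : ℕ) (x : Fin m → Fin n → ℝ) (y : Fin m → ℝ)
    {S T : Finset (Fin n)} (hST : S ⊆ T) :
    trEr n m x y T ≤ trEr n m x y S := by
  apply csInf_le_csInf
  · refine ⟨0, ?_⟩
    rintro r ⟨w, b, rfl⟩
    apply mul_nonneg (by positivity)
    exact Finset.sum_nonneg fun i _ => le_max_left _ _
  · exact ⟨_, 0, 0, rfl⟩
  · rintro r ⟨w, b, rfl⟩
    refine ⟨fun j => if j ∈ S then w j else 0, b, ?_⟩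
    congr 1
    refine Finset.sum_congr rfl fun i _ => ?_
    congr 2
    have : ∀ j ∈ T, (if j ∈ S then w j else 0) * x i j
        = if j ∈ S then w j * x i j else 0 := by
      intro j _; split <;> simp
    rw [Finset.sum_congr rfl this, Finset.sum_ite_mem,
      Finset.inter_eq_right.mpr hST]

/-- Theorem 2: the SVEA `e_j = tr_er ∅ / n - φ_j(v)` of the classification game
`v S = tr_er ∅ - tr_er S` satisfies individual rationality:
`e_j ≤ tr_er {j}` for every feature `j`. -/
theorem svea_individual_rationality (n m : ℕ) (hn : 1 ≤ n) (hm : 1 ≤ m)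
    (x : Fin m → Fin n → ℝ) (y : Fin m → ℝ)
    (hy : ∀ i, y i = 1 ∨ y i = -1)
    (v : Finset (Fin n) → ℝ)
    (hv : ∀ S, v S = trEr n m x y ∅ - trEr n m x y S)
    (e : Fin n → ℝ)
    (he : ∀ j, e j = trEr n m x y ∅ / (n : ℝ) - shapley n v j) :
    ∀ j : Fin n, e j ≤ trEr n m x y {j} := by
  intro j
  set t : Finset (Fin n) → ℝ := trEr n m x y with ht
  have hnpos : (0:ℝ) < n := by exact_mod_cast hn
  -- lower bound for shapley via the empty-set term
  have hterm : ∀ S ∈ ((Finset.univ : Finset (Fin n)).erase j).powerset,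
      0 ≤ ((S.card.factorial * (n - S.card - 1).factorial : ℕ) : ℝ) / (n.factorial : ℝ)
        * (v (insert j S) - v S) := by
    intro S _
    apply mul_nonneg (by positivity)
    rw [hv, hv]
    have := trEr_anti n m x y (Finset.subset_insert j S)
    linarith
  have h0 : ((Finset.card (∅ : Finset (Fin n))).factorial
        * (n - (Finset.card (∅ : Finset (Fin n))) - 1).factorial : ℕ)
      = (n - 1).factorial := by simp
  have hshap : (1 / (n:ℝ)) * (t ∅ - t {j}) ≤ shapley n v j := by
    have hsingle := Finset.single_le_sum hterm
      (Finset.empty_mem_powerset ((Finset.univ : Finset (Fin n)).erase j))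
    refine le_trans (le_of_eq ?_) hsingle
    rw [h0, hv, hv]
    have hfac : ((n - 1).factorial : ℝ) / (n.factorial : ℝ) = 1 / (n:ℝ) := by
      rw [← Nat.mul_factorial_pred (by omega : n ≠ 0)]
      push_cast
      field_simp
    rw [hfac]
    simp [ht]
  have hj0 : 0 ≤ t {j} := trEr_nonneg n m x y {j}
  have : e j ≤ t {j} / n := by
    rw [he j]
    have : t ∅ / (n:ℝ) - (1 / (n:ℝ)) * (t ∅ - t {j}) = t {j} / n := by ring
    linarith
  calc e j ≤ t {j} / n := this
    _ ≤ t {j} := div_le_self hj0 (by exact_mod_cast hn)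
end
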